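/- A nonconstant polynomial function f: ℂ → ℂ cannot have imaginary part of at most logarithmic growth; more precisely, if f ∈ ℂ[z] satisfies |Im f(z)| ≤ A + B·log(1 + |z|) for all z ∈ ℂ and some constants A, B ≥ 0, then f is constant. -/

import Mathlib

open Polynomial Finset

/-- Splitting off the logarithm: `B * log t ≤ t/2 + B * log (2*(B+1))` for `t ≥ 1`. -/
lemma log_split (B t : ℝ) (hB : 0 ≤ B) (ht : 1 ≤ t) :
    B * Real.log t ≤ t / 2 + B * Real.log (2 * (B + 1)) := by
  have ht0 : (0:ℝ) < t := lt_of_lt_of_le one_pos ht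
  have hd : (0:ℝ) < 2 * (B + 1) := by linarith
  have h1 : Real.log t - Real.log (2 * (B + 1)) ≤ t / (2 * (B + 1)) := by
    have := Real.log_le_sub_one_of_pos (show 0 < t / (2 * (B + 1)) from div_pos ht0 hd)
    rw [Real.log_div (ne_of_gt ht0) (ne_of_gt hd)] at this
    linarith
  have h2 : B * Real.log t ≤ B * (t / (2 * (B + 1))) + B * Real.log (2 * (B + 1)) := by
    nlinarith [mul_le_mul_of_nonneg_left h1 hB]
  have h3 : B * (t / (2 * (B + 1))) ≤ t / 2 := by
    rw [mul_div_assoc', div_le_div_iff₀ hd two_pos]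
    nlinarith
  linarith

/-- A polynomial function `f : ℂ → ℂ` whose imaginary part has at most
logarithmic growth is constant. -/
theorem polynomial_constant_of_log_growth_im (p : Polynomial ℂ) (A B : ℝ)
    (hA : 0 ≤ A) (hB : 0 ≤ B)
    (h : ∀ z : ℂ, |(p.eval z).im| ≤ A + B * Real.log (1 + ‖z‖)) :
    ∀ z w : ℂ, p.eval z = p.eval w := by
  suffices hd : p.natDegree = 0 by
    obtain ⟨a, ha⟩ := Polynomial.natDegree_eq_zero.mp hd
    intro z w
    simp [← ha]
  by_contra hd
  have hn : 1 ≤ p.natDegree := Nat.one_le_iff_ne_zero.mpr hd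
  have hp0 : p ≠ 0 := fun hp => by simp [hp] at hn
  set n := p.natDegree with hndef
  set Mn : NNReal := (range n).sup (‖p.coeff ·‖₊) with hMn
  set Ln : NNReal := ‖p.leadingCoeff‖₊ with hLn
  have hLn0 : 0 < Ln := by
    simpa [hLn] using (Polynomial.leadingCoeff_ne_zero.mpr hp0)
  set M : ℝ := (Mn : ℝ) with hM
  set L : ℝ := (Ln : ℝ) with hL
  have hM0 : 0 ≤ M := Mn.coe_nonneg
  have hL0 : (0:ℝ) < L := hLn0
  set K : ℝ := A + B * Real.log (2 + M / L + 1 / L) + B * Real.log (2 * (B + 1)) with hK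
  -- main estimate: every t ≥ 1 satisfies t ≤ t/2 + K
  have key : ∀ t : ℝ, 1 ≤ t → t ≤ t / 2 + K := by
    intro t ht
    have ht0 : (0:ℝ) < t := lt_of_lt_of_le one_pos ht
    set c : ℂ := (t : ℂ) * Complex.I with hc
    have hcabs : ‖c‖ = t := by
      simp [hc, abs_of_nonneg ht0.le]
    set q : Polynomial ℂ := p - Polynomial.C c with hqdef
    have hqdeg : q.natDegree = n := Polynomial.natDegree_sub_C
    have hq0 : q ≠ 0 := fun hq => by simp [hq] at hqdeg; omega
    -- a root of q
    obtain ⟨z, hz⟩ := Complex.exists_root (f := q)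
      (Polynomial.natDegree_pos_iff_degree_pos.mp (by omega : 0 < q.natDegree))
    have hpz : p.eval z = c := by
      have := hz
      simp only [Polynomial.IsRoot.def, hqdef, Polynomial.eval_sub, Polynomial.eval_C,
        sub_eq_zero] at this
      exact this
    -- root bound
    have hzlt : ‖z‖₊ < Polynomial.cauchyBound q := hz.norm_lt_cauchyBound hq0
    have hqlead : q.leadingCoeff = p.leadingCoeff := by
      have h1 : q.coeff n = p.coeff n := by
        rw [hqdef, Polynomial.coeff_sub, Polynomial.coeff_C, if_neg (by omega : ¬ n = 0), sub_zero]
      rw [Polynomial.leadingCoeff, hqdeg, h1, hndef, Polynomial.coeff_natDegree]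
    have hsup : (range q.natDegree).sup (‖q.coeff ·‖₊) ≤ Mn + ‖c‖₊ := by
      rw [hqdeg]
      apply Finset.sup_le
      intro i hi
      have h1 : ‖q.coeff i‖₊ ≤ ‖p.coeff i‖₊ + ‖(Polynomial.C c).coeff i‖₊ := by
        simpa [hqdef] using nnnorm_sub_le (p.coeff i) ((Polynomial.C c).coeff i)
      have h2 : ‖p.coeff i‖₊ ≤ Mn := Finset.le_sup (f := (‖p.coeff ·‖₊)) hi
      have h3 : ‖(Polynomial.C c).coeff i‖₊ ≤ ‖c‖₊ := by
        rcases eq_or_ne i 0 with rfl | hi0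
        · simp [Polynomial.coeff_C]
        · simp [Polynomial.coeff_C, hi0]
      exact le_trans h1 (add_le_add h2 h3)
    have hcb : Polynomial.cauchyBound q ≤ (Mn + ‖c‖₊) / Ln + 1 := by
      rw [Polynomial.cauchyBound, hqlead, ← hLn]
      gcongr
    -- transfer to ℝ
    have hzR : ‖z‖ ≤ (M + t) / L + 1 := by
      have := le_trans hzlt.le hcb
      have h2 : (‖z‖₊ : ℝ) ≤ (((Mn + ‖c‖₊) / Ln + 1 : NNReal) : ℝ) := NNReal.coe_le_coe.mpr this
      have h3 : (‖c‖₊ : ℝ) = t := by rw [coe_nnnorm, hcabs]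
      rw [NNReal.coe_add, NNReal.coe_div, NNReal.coe_add, h3, NNReal.coe_one] at h2
      simpa [hM, hL] using h2
    -- the growth hypothesis at z
    have him : |(p.eval z).im| = t := by
      rw [hpz]
      simp [hc, abs_of_nonneg ht0.le]
    have hlog1 : (0:ℝ) < 1 + ‖z‖ := by positivity
    have hlog2 : 1 + ‖z‖ ≤ (2 + M / L + 1 / L) * t := by
      have : 1 + ‖z‖ ≤ 2 + M / L + t / L := by
        have : (M + t) / L = M / L + t / L := add_div M t L
        linarith [hzR, this]
      have h2 : 2 + M / L ≤ (2 + M / L) * t := by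
        nlinarith [div_nonneg hM0 hL0.le]
      have h3 : t / L = (1 / L) * t := by ring
      nlinarith [div_nonneg hM0 hL0.le]
    have hfac : (0:ℝ) < 2 + M / L + 1 / L := by positivity
    have hstep : Real.log (1 + ‖z‖) ≤
        Real.log (2 + M / L + 1 / L) + Real.log t := by
      calc Real.log (1 + ‖z‖) ≤ Real.log ((2 + M / L + 1 / L) * t) :=
            Real.log_le_log hlog1 hlog2
        _ = Real.log (2 + M / L + 1 / L) + Real.log t :=
            Real.log_mul (ne_of_gt hfac) (ne_of_gt ht0)
    have hmain := h z
    rw [him] at hmain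
    have hB1 : B * Real.log (1 + ‖z‖) ≤
        B * Real.log (2 + M / L + 1 / L) + B * Real.log t := by
      nlinarith [mul_le_mul_of_nonneg_left hstep hB]
    have hB2 := log_split B t hB ht
    rw [hK]
    linarith
  -- contradiction
  set t0 : ℝ := max 1 (2 * K + 2) with ht0
  have h1 : 1 ≤ t0 := le_max_left _ _
  have h2 : 2 * K + 2 ≤ t0 := le_max_right _ _
  have := key t0 h1
  clear_value t0 K
  linarith
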